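/- For every t ≥ 0 and every x ∈ ℝ, A_0^{(v_1,…,v_{k−1}, v_k + t)}(x) = A_0^{(v_1,…,v_{k−1}, v_k)}(x) + t/2. In other words, increasing the innermost variance v_k by t increases the recursively defined function A_0 by exactly the constant t/2. -/

import Mathlib

open MeasureTheory ProbabilityTheory Real

open scoped NNReal ENNReal

noncomputable section

/-- The centered Gaussian measure on `ℝ` with variance `v` (Dirac at `0` if `v ≤ 0`). -/
def gauss (v : ℝ) : Measure ℝ := gaussianReal 0 v.toNNReal

/-- The recursively defined functions: `parisiB m v k j = A_{k-j}^{(v)}`, so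
`parisiB m v k 0 = A_k = log cosh` and `parisiB m v k k = A_0`, where
`A_{l-1}(x) = (1/m_l) log ∫ exp (m_l A_l (x+y)) dγ_{v_l}(y)`. -/
def parisiB (m v : ℕ → ℝ) (k : ℕ) : ℕ → ℝ → ℝ
  | 0, x => Real.log (Real.cosh x)
  | j + 1, x =>
      (1 / m (k - j)) *
        Real.log (∫ y, Real.exp (m (k - j) * parisiB m v k j (x + y)) ∂(gauss (v (k - j))))

instance gauss_isProbabilityMeasure (v : ℝ) : IsProbabilityMeasure (gauss v) := by
  unfold gauss; infer_instance

lemma pdf_smul_exp {v : ℝ} (hv : 0 < v) (c y : ℝ) :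
    (gaussianPDFReal 0 v.toNNReal y).toNNReal • rexp (c * y)
      = ((√(2 * π * v))⁻¹ * rexp (c ^ 2 * v / 2)) * rexp (-(2*v)⁻¹ * (y - c*v) ^ 2) := by
  have hV : (v.toNNReal : ℝ) = v := Real.coe_toNNReal _ hv.le
  rw [NNReal.smul_def, Real.coe_toNNReal _ (gaussianPDFReal_nonneg 0 _ _), smul_eq_mul]
  simp only [gaussianPDFReal, hV, sub_zero, mul_assoc, ← Real.exp_add]
  congr 2
  field_simp
  ring

lemma integrable_dirac_of {f : ℝ → ℝ} (hf : Measurable f) (a : ℝ) :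
    Integrable f (Measure.dirac a) := by
  refine ⟨hf.aestronglyMeasurable, ?_⟩
  rw [HasFiniteIntegral, lintegral_dirac' a hf.enorm]
  exact ENNReal.coe_lt_top

lemma gaussianPDF_eq (v : ℝ≥0) : gaussianPDF 0 v
    = fun y => ((gaussianPDFReal 0 v y).toNNReal : ℝ≥0∞) := rfl

lemma integral_exp_mul_gauss {v : ℝ} (hv : 0 ≤ v) (c : ℝ) :
    ∫ y, rexp (c * y) ∂(gauss v) = rexp (c ^ 2 * v / 2) := by
  rcases eq_or_lt_of_le hv with h | h
  · rw [gauss, ← h]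
    simp [gaussianReal_zero_var, integral_dirac]
  · have hV0 : v.toNNReal ≠ 0 := by
      simp only [ne_eq, Real.toNNReal_eq_zero, not_le]; exact h
    rw [gauss, gaussianReal_of_var_ne_zero _ hV0]
    have hm : Measurable fun y => (gaussianPDFReal 0 v.toNNReal y).toNNReal :=
      (measurable_gaussianPDFReal 0 _).real_toNNReal
    rw [gaussianPDF_eq, integral_withDensity_eq_integral_smul hm]
    simp_rw [pdf_smul_exp h c]
    rw [integral_const_mul,
      integral_sub_right_eq_self (fun y => rexp (-(2*v)⁻¹ * y ^ 2)) (c*v),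
      integral_gaussian]
    have h2 : π / (2*v)⁻¹ = 2 * π * v := by field_simp
    rw [h2]
    have hs : √(2 * π * v) ≠ 0 := by positivity
    field_simp

lemma integrable_exp_mul_gauss (c : ℝ) (v : ℝ) :
    Integrable (fun y => rexp (c * y)) (gauss v) := by
  rcases le_or_gt v 0 with h | h
  · have h0 : v.toNNReal = 0 := Real.toNNReal_of_nonpos h
    rw [gauss, h0, gaussianReal_zero_var]
    exact integrable_dirac_of (Real.measurable_exp.comp (measurable_id.const_mul c)) 0
  · have hV0 : v.toNNReal ≠ 0 := by
      simp only [ne_eq, Real.toNNReal_eq_zero, not_le]; exact h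
    rw [gauss, gaussianReal_of_var_ne_zero _ hV0]
    have hm : Measurable fun y => (gaussianPDFReal 0 v.toNNReal y).toNNReal :=
      (measurable_gaussianPDFReal 0 _).real_toNNReal
    rw [gaussianPDF_eq, integrable_withDensity_iff_integrable_smul hm]
    have hbase : Integrable (fun y : ℝ => rexp (-(2*v)⁻¹ * (y - c*v) ^ 2)) volume :=
      (integrable_exp_neg_mul_sq (by positivity)).comp_sub_right (c*v)
    exact (hbase.const_mul ((√(2 * π * v))⁻¹ * rexp (c ^ 2 * v / 2))).congr
      (Filter.Eventually.of_forall fun y => (pdf_smul_exp h c y).symm)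

lemma integrable_exp_abs_mul_gauss (c v : ℝ) :
    Integrable (fun y => rexp (c * |y|)) (gauss v) := by
  refine ((integrable_exp_mul_gauss c v).add (integrable_exp_mul_gauss (-c) v)).mono
    ((Real.measurable_exp.comp ((measurable_abs).const_mul c)).aestronglyMeasurable) ?_
  filter_upwards with y
  simp only [Pi.add_apply]
  rw [Real.norm_eq_abs, Real.norm_eq_abs, abs_of_nonneg (Real.exp_pos _).le,
    abs_of_nonneg (by positivity : (0:ℝ) ≤ rexp (c * y) + rexp (-c * y))]
  rcases abs_cases y with ⟨hy, _⟩ | ⟨hy, _⟩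
  · rw [hy]
    nlinarith [Real.exp_pos (-c * y)]
  · rw [hy, mul_neg, ← neg_mul]
    nlinarith [Real.exp_pos (c * y)]

lemma step_integrable {f : ℝ → ℝ} (hf : Measurable f) {D : ℝ} (hD : ∀ z, f z ≤ D + |z|)
    {c : ℝ} (hc : 0 ≤ c) (v x : ℝ) :
    Integrable (fun y => rexp (c * f (x + y))) (gauss v) := by
  refine ((integrable_exp_abs_mul_gauss c v).const_mul (rexp (c * (D + |x|)))).mono
    ((Real.measurable_exp.comp
      ((hf.comp (measurable_id.const_add x)).const_mul c)).aestronglyMeasurable) ?_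
  filter_upwards with y
  rw [Real.norm_eq_abs, Real.norm_eq_abs, abs_of_nonneg (Real.exp_pos _).le,
    abs_of_nonneg (by positivity : (0:ℝ) ≤ rexp (c * (D + |x|)) * rexp (c * |y|)), ← Real.exp_add]
  have h1 : f (x + y) ≤ D + |x| + |y| := by
    have := abs_add_le x y
    have := hD (x + y)
    linarith
  exact Real.exp_le_exp.2 (by nlinarith)

lemma step_one_le {f : ℝ → ℝ} (hf0 : ∀ z, 0 ≤ f z) {c : ℝ} (hc : 0 ≤ c) {v x : ℝ}
    (hInt : Integrable (fun y => rexp (c * f (x + y))) (gauss v)) :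
    1 ≤ ∫ y, rexp (c * f (x + y)) ∂(gauss v) := by
  have h := integral_mono (integrable_const (1:ℝ)) hInt
    (fun y => Real.one_le_exp (mul_nonneg hc (hf0 _)))
  simpa using h

lemma log_integral_add_const {c : ℝ} (hc : c ≠ 0) {v : ℝ} {h : ℝ → ℝ} (s : ℝ)
    (hInt : Integrable (fun y => rexp (c * h y)) (gauss v))
    (hpos : 0 < ∫ y, rexp (c * h y) ∂(gauss v)) :
    (1/c) * Real.log (∫ y, rexp (c * (h y + s)) ∂(gauss v))
      = (1/c) * Real.log (∫ y, rexp (c * h y) ∂(gauss v)) + s := by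
  have h1 : ∀ y, rexp (c * (h y + s)) = rexp (c * h y) * rexp (c * s) := fun y => by
    rw [← Real.exp_add]; ring_nf
  simp_rw [h1]
  rw [integral_mul_const, Real.log_mul hpos.ne' (Real.exp_ne_zero _), Real.log_exp]
  field_simp

lemma log_cosh_le_abs (x : ℝ) : Real.log (Real.cosh x) ≤ |x| := by
  rw [Real.log_le_iff_le_exp (Real.cosh_pos x), Real.cosh_eq]
  have h1 : rexp x ≤ rexp |x| := Real.exp_le_exp.2 (le_abs_self x)
  have h2 : rexp (-x) ≤ rexp |x| := Real.exp_le_exp.2 (neg_le_abs x)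
  linarith

lemma parisiB_props (m w : ℕ → ℝ) (k : ℕ)
    (hm : ∀ l, 1 ≤ l → l ≤ k → 0 < m l) (hw : ∀ l, 1 ≤ l → l ≤ k → 0 ≤ w l) :
    ∀ j, j ≤ k → Measurable (parisiB m w k j) ∧ (∀ x, 0 ≤ parisiB m w k j x) ∧
      ∃ D, ∀ x, parisiB m w k j x ≤ D + |x| := by
  intro j
  induction j with
  | zero =>
    intro _
    refine ⟨Real.measurable_log.comp Real.continuous_cosh.measurable,
      fun x => Real.log_nonneg (Real.one_le_cosh x), 0, fun x => ?_⟩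
    simpa [parisiB] using log_cosh_le_abs x
  | succ j ih =>
    intro hjk
    obtain ⟨hmeas, hpos, D, hD⟩ := ih (by omega)
    set c := m (k - j) with hcdef
    have hc : 0 < c := hm _ (by omega) (by omega)
    have hvl : 0 ≤ w (k - j) := hw _ (by omega) (by omega)
    have hInt : ∀ x, Integrable (fun y => rexp (c * parisiB m w k j (x + y)))
        (gauss (w (k - j))) := fun x => step_integrable hmeas hD hc.le _ x
    have hone : ∀ x, 1 ≤ ∫ y, rexp (c * parisiB m w k j (x + y)) ∂(gauss (w (k - j))) :=
      fun x => step_one_le hpos hc.le (hInt x)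
    have hdef : ∀ x, parisiB m w k (j+1) x
        = (1/c) * Real.log (∫ y, rexp (c * parisiB m w k j (x + y)) ∂(gauss (w (k - j)))) :=
      fun x => rfl
    refine ⟨?_, ?_, ?_⟩
    · have hF : StronglyMeasurable fun p : ℝ × ℝ => rexp (c * parisiB m w k j (p.1 + p.2)) :=
        (Real.measurable_exp.comp ((hmeas.comp measurable_add).const_mul c)).stronglyMeasurable
      have hI : Measurable fun x => ∫ y, rexp (c * parisiB m w k j (x + y))
          ∂(gauss (w (k - j))) := (hF.integral_prod_right').measurable
      simpa [funext hdef] using (Real.measurable_log.comp hI).const_mul (1/c)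
    · intro x
      rw [hdef x]
      have := Real.log_nonneg (hone x)
      positivity
    · set M := 2 * rexp (c ^ 2 * w (k - j) / 2) with hM
      have hM1 : 1 ≤ M := by
        have : (1:ℝ) ≤ rexp (c ^ 2 * w (k - j) / 2) := Real.one_le_exp (by positivity)
        rw [hM]; linarith
      refine ⟨D + Real.log M / c, fun x => ?_⟩
      rw [hdef x]
      have hIle : ∫ y, rexp (c * parisiB m w k j (x + y)) ∂(gauss (w (k - j)))
          ≤ rexp (c * (D + |x|)) * M := by
        have hb : Integrable (fun y => rexp (c * (D + |x|)) * (rexp (c * y) + rexp (-c * y)))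
            (gauss (w (k - j))) :=
          ((integrable_exp_mul_gauss c _).add (integrable_exp_mul_gauss (-c) _)).const_mul _
        have hmono : ∀ y, rexp (c * parisiB m w k j (x + y))
            ≤ rexp (c * (D + |x|)) * (rexp (c * y) + rexp (-c * y)) := by
          intro y
          have h1 : parisiB m w k j (x + y) ≤ D + |x| + |y| := by
            have := abs_add_le x y
            have := hD (x + y)
            linarith
          have h2 : rexp (c * parisiB m w k j (x + y)) ≤ rexp (c * (D + |x|)) * rexp (c * |y|) := by
            rw [← Real.exp_add]
            exact Real.exp_le_exp.2 (by nlinarith)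
          have h3 : rexp (c * |y|) ≤ rexp (c * y) + rexp (-c * y) := by
            rcases abs_cases y with ⟨hy, _⟩ | ⟨hy, _⟩
            · rw [hy]; nlinarith [Real.exp_pos (-c * y)]
            · rw [hy, mul_neg, ← neg_mul]; nlinarith [Real.exp_pos (c * y)]
          calc rexp (c * parisiB m w k j (x + y)) ≤ rexp (c * (D + |x|)) * rexp (c * |y|) := h2
            _ ≤ rexp (c * (D + |x|)) * (rexp (c * y) + rexp (-c * y)) := by
                have := Real.exp_pos (c * (D + |x|))
                nlinarith
        calc ∫ y, rexp (c * parisiB m w k j (x + y)) ∂(gauss (w (k - j)))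
            ≤ ∫ y, rexp (c * (D + |x|)) * (rexp (c * y) + rexp (-c * y))
              ∂(gauss (w (k - j))) := integral_mono (hInt x) hb hmono
          _ = rexp (c * (D + |x|)) * M := by
              rw [integral_const_mul, integral_add (integrable_exp_mul_gauss c _)
                (integrable_exp_mul_gauss (-c) _), integral_exp_mul_gauss hvl,
                integral_exp_mul_gauss hvl, hM]
              ring_nf
      have hlog : Real.log (∫ y, rexp (c * parisiB m w k j (x + y)) ∂(gauss (w (k - j))))
          ≤ c * (D + |x|) + Real.log M := by
        calc Real.log (∫ y, rexp (c * parisiB m w k j (x + y)) ∂(gauss (w (k - j))))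
            ≤ Real.log (rexp (c * (D + |x|)) * M) :=
              Real.log_le_log (lt_of_lt_of_le zero_lt_one (hone x)) hIle
          _ = c * (D + |x|) + Real.log M := by
              rw [Real.log_mul (Real.exp_ne_zero _) (by linarith), Real.log_exp]
      calc (1/c) * Real.log (∫ y, rexp (c * parisiB m w k j (x + y)) ∂(gauss (w (k - j))))
          ≤ (1/c) * (c * (D + |x|) + Real.log M) := by
            have h1c : (0:ℝ) ≤ 1/c := by positivity
            nlinarith
        _ = D + Real.log M / c + |x| := by field_simp; ring

lemma parisiB_one (m w : ℕ → ℝ) (k : ℕ) (hmk : m k = 1) (hw : 0 ≤ w k) (x : ℝ) :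
    parisiB m w k 1 x = Real.log (Real.cosh x) + w k / 2 := by
  have hdef : parisiB m w k 1 x
      = (1 / m (k - 0)) * Real.log (∫ y, rexp (m (k - 0) * parisiB m w k 0 (x + y))
        ∂(gauss (w (k - 0)))) := rfl
  have h0 : ∀ z, parisiB m w k 0 z = Real.log (Real.cosh z) := fun z => rfl
  rw [hdef]
  simp only [Nat.sub_zero, hmk, one_mul, h0]
  have hcosh : ∀ y : ℝ, rexp (Real.log (Real.cosh (x + y)))
      = (rexp x / 2) * rexp (1 * y) + (rexp (-x) / 2) * rexp (-1 * y) := by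
    intro y
    rw [Real.exp_log (Real.cosh_pos _), Real.cosh_eq, Real.exp_add, neg_add, Real.exp_add]
    ring
  simp_rw [hcosh]
  rw [integral_add ((integrable_exp_mul_gauss 1 _).const_mul _)
      ((integrable_exp_mul_gauss (-1) _).const_mul _),
    integral_const_mul, integral_const_mul, integral_exp_mul_gauss hw,
    integral_exp_mul_gauss hw]
  have hc : rexp x / 2 * rexp ((1:ℝ) ^ 2 * w k / 2) + rexp (-x) / 2 * rexp ((-1:ℝ) ^ 2 * w k / 2)
      = Real.cosh x * rexp (w k / 2) := by
    rw [Real.cosh_eq]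
    norm_num
    ring
  rw [hc, Real.log_mul (ne_of_gt (Real.cosh_pos x)) (Real.exp_ne_zero _), Real.log_exp]
  norm_num


/-- Increasing the innermost variance `v_k` by `t ≥ 0` increases `A_0` by exactly `t/2`:
`A_0^{(v_1,…,v_{k-1},v_k+t)}(x) = A_0^{(v_1,…,v_k)}(x) + t/2`. -/
theorem parisiB_update_last_variance
    (k : ℕ) (hk : 1 ≤ k) (m v : ℕ → ℝ)
    (hm1 : 0 < m 1) (hmono : ∀ l, 1 ≤ l → l < k → m l ≤ m (l + 1)) (hmk : m k = 1)
    (hv : ∀ l, 1 ≤ l → l ≤ k → 0 ≤ v l)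
    (t : ℝ) (ht : 0 ≤ t) (x : ℝ) :
    parisiB m (Function.update v k (v k + t)) k k x = parisiB m v k k x + t / 2 := by

  set v' := Function.update v k (v k + t) with hv'def
  have hm : ∀ l, 1 ≤ l → l ≤ k → 0 < m l := by
    intro l hl
    induction l, hl using Nat.le_induction with
    | base => intro _; exact hm1
    | succ n hn ih =>
      intro hnk
      exact lt_of_lt_of_le (ih (by omega)) (hmono n hn (by omega))
  have hv'k : v' k = v k + t := Function.update_self k _ v
  have key : ∀ j, 1 ≤ j → j ≤ k → ∀ z, parisiB m v' k j z = parisiB m v k j z + t / 2 := by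
    intro j hj
    induction j, hj using Nat.le_induction with
    | base =>
      intro _ z
      rw [parisiB_one m v' k hmk (by rw [hv'k]; linarith [hv k hk le_rfl]),
        parisiB_one m v k hmk (hv k hk le_rfl), hv'k]
      ring
    | succ j hj ih =>
      intro hjk z
      have ihz := ih (by omega)
      have hupd : v' (k - j) = v (k - j) := Function.update_of_ne (by omega) _ v
      obtain ⟨hmeas, hpos, D, hD⟩ := parisiB_props m v k hm hv j (by omega)
      have hc : 0 < m (k - j) := hm _ (by omega) (by omega)
      have hInt : Integrable (fun y => rexp (m (k - j) * parisiB m v k j (z + y)))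
          (gauss (v (k - j))) := step_integrable hmeas hD hc.le _ z
      have hone := step_one_le hpos hc.le hInt
      have hdef' : parisiB m v' k (j+1) z
          = (1 / m (k - j)) * Real.log (∫ y, rexp (m (k - j) * parisiB m v' k j (z + y))
            ∂(gauss (v' (k - j)))) := rfl
      have hdef : parisiB m v k (j+1) z
          = (1 / m (k - j)) * Real.log (∫ y, rexp (m (k - j) * parisiB m v k j (z + y))
            ∂(gauss (v (k - j)))) := rfl
      rw [hdef', hdef, hupd]
      simp_rw [ihz]
      exact log_integral_add_const hc.ne' (t/2) hInt (lt_of_lt_of_le zero_lt_one hone)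
  exact key k hk le_rfl x
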